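/- Let ω = v⁻³ dv ∧ da on O₂ = {(x,v,a) : v ≠ 0} and Z_P = x² ∂/∂x + 2vx ∂/∂v + 2(ax + v²) ∂/∂a. Then the Lie derivative ω_{Z_P} := L_{Z_P} ω equals −(2/v³)(x dv∧da + v da∧dx + a dx∧dv), and ω_{Z_P} is closed. -/

import Mathlib

open ContinuousLinearMap

lemma hv_fd (p : ℝ × ℝ × ℝ) :
    HasFDerivAt (fun q : ℝ × ℝ × ℝ => q.2.1)
      ((ContinuousLinearMap.fst ℝ ℝ ℝ).comp (ContinuousLinearMap.snd ℝ ℝ (ℝ × ℝ))) p :=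
  hasFDerivAt_fst.comp p hasFDerivAt_snd

lemma ha_fd (p : ℝ × ℝ × ℝ) :
    HasFDerivAt (fun q : ℝ × ℝ × ℝ => q.2.2)
      ((ContinuousLinearMap.snd ℝ ℝ ℝ).comp (ContinuousLinearMap.snd ℝ ℝ (ℝ × ℝ))) p :=
  hasFDerivAt_snd.comp p hasFDerivAt_snd

lemma fderiv_rat (c A B C : ℝ) (p v : ℝ × ℝ × ℝ) (hp : p.2.1 ≠ 0) :
    fderiv ℝ (fun q : ℝ × ℝ × ℝ => c / q.2.1 ^ 3 * (q.1 * A + q.2.1 * B + q.2.2 * C)) p v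
      = -3 * c / p.2.1 ^ 4 * v.2.1 * (p.1 * A + p.2.1 * B + p.2.2 * C)
        + c / p.2.1 ^ 3 * (v.1 * A + v.2.1 * B + v.2.2 * C) := by
  have h3 : p.2.1 * (p.2.1 * p.2.1) ≠ 0 := by
    simp [hp]
  have hfun : (fun q : ℝ × ℝ × ℝ => c / q.2.1 ^ 3 * (q.1 * A + q.2.1 * B + q.2.2 * C))
      = fun q : ℝ × ℝ × ℝ =>
        (c * (q.2.1 * (q.2.1 * q.2.1))⁻¹) * (q.1 * A + q.2.1 * B + q.2.2 * C) := by
    funext q; ring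
  rw [hfun]
  have Hg := ((hasFDerivAt_inv h3).comp p ((hv_fd p).mul ((hv_fd p).mul (hv_fd p)))).const_mul c
  have Hl := ((hasFDerivAt_fst.mul_const A).add ((hv_fd p).mul_const B)).add
    ((ha_fd p).mul_const C)
  have H := Hg.mul Hl
  have hd := H.fderiv
  simp only [Function.comp_def, Pi.mul_def, Pi.add_def] at hd
  rw [hd]
  simp [ContinuousLinearMap.comp_apply]
  field_simp
  ring

lemma fderiv_inv3 (c : ℝ) (p v : ℝ × ℝ × ℝ) (hp : p.2.1 ≠ 0) :
    fderiv ℝ (fun q : ℝ × ℝ × ℝ => c / q.2.1 ^ 3) p v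
      = -3 * c / p.2.1 ^ 4 * v.2.1 := by
  have h3 : p.2.1 * (p.2.1 * p.2.1) ≠ 0 := by simp [hp]
  have hfun : (fun q : ℝ × ℝ × ℝ => c / q.2.1 ^ 3)
      = fun q : ℝ × ℝ × ℝ => c * (q.2.1 * (q.2.1 * q.2.1))⁻¹ := by
    funext q; ring
  rw [hfun]
  have H := ((hasFDerivAt_inv h3).comp p ((hv_fd p).mul ((hv_fd p).mul (hv_fd p)))).const_mul c
  have hd := H.fderiv
  simp only [Function.comp_def, Pi.mul_def, Pi.add_def] at hd
  rw [hd]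
  simp [ContinuousLinearMap.comp_apply]
  field_simp
  ring

lemma fderiv_Z (p v : ℝ × ℝ × ℝ) :
    fderiv ℝ (fun q : ℝ × ℝ × ℝ =>
        ((q.1 ^ 2 : ℝ), (2 * q.2.1 * q.1, 2 * (q.2.2 * q.1 + q.2.1 ^ 2)))) p v
      = (2 * p.1 * v.1,
         (2 * (v.2.1 * p.1 + p.2.1 * v.1),
          2 * (v.2.2 * p.1 + p.2.2 * v.1 + 2 * p.2.1 * v.2.1))) := by
  have hfun : (fun q : ℝ × ℝ × ℝ =>
        ((q.1 ^ 2 : ℝ), (2 * q.2.1 * q.1, 2 * (q.2.2 * q.1 + q.2.1 ^ 2))))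
      = fun q : ℝ × ℝ × ℝ =>
        ((q.1 * q.1 : ℝ), ((2 * q.2.1) * q.1, 2 * (q.2.2 * q.1 + q.2.1 * q.2.1))) := by
    funext q; simp; constructor <;> ring
  rw [hfun]
  have H1 := (hasFDerivAt_fst (𝕜 := ℝ) (p := p) (E := ℝ) (F := ℝ × ℝ)).mul hasFDerivAt_fst
  have H2 := ((hv_fd p).const_mul 2).mul hasFDerivAt_fst
  have H3 := (((ha_fd p).mul hasFDerivAt_fst).add ((hv_fd p).mul (hv_fd p))).const_mul 2
  have H := H1.prodMk (H2.prodMk H3)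
  have hd := H.fderiv
  simp only [Pi.mul_def, Pi.add_def] at hd
  rw [hd]
  simp [ContinuousLinearMap.comp_apply]
  refine ⟨by ring, by ring, by ring⟩


/-- on `O₂ = {(x,v,a) : v ≠ 0}` with `ω = v⁻³ dv ∧ da` and
`Z_P = x² ∂ₓ + 2vx ∂ᵥ + 2(ax + v²) ∂ₐ`, the Lie derivative `L_{Z_P} ω` equals
`−(2/v³)(x dv∧da + v da∧dx + a dx∧dv)`, and this 2-form is closed.
The Lie derivative of a 2-form along `Z` is computed pointwise (on constant vectors) by
`(L_Z ω)(u,w) = D(ω(u,w))·Z + ω(DZ·u, w) + ω(u, DZ·w)`, and closedness of a 2-form `η`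
is the vanishing of the cyclic sum `Σ D(η(w,s))·u` over constant vectors. -/
theorem lie_derivative_presymplectic_form
    (ω η : ℝ × ℝ × ℝ → (ℝ × ℝ × ℝ) → (ℝ × ℝ × ℝ) → ℝ)
    (Z : ℝ × ℝ × ℝ → ℝ × ℝ × ℝ)
    (hω : ∀ p u w, ω p u w = (u.2.1 * w.2.2 - u.2.2 * w.2.1) / p.2.1 ^ 3)
    (hZ : ∀ p, Z p = (p.1 ^ 2, 2 * p.2.1 * p.1, 2 * (p.2.2 * p.1 + p.2.1 ^ 2)))
    (hη : ∀ p u w, η p u w = -(2 / p.2.1 ^ 3) *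
      (p.1 * (u.2.1 * w.2.2 - u.2.2 * w.2.1)
        + p.2.1 * (u.2.2 * w.1 - u.1 * w.2.2)
        + p.2.2 * (u.1 * w.2.1 - u.2.1 * w.1))) :
    (∀ p : ℝ × ℝ × ℝ, p.2.1 ≠ 0 → ∀ u w,
      fderiv ℝ (fun q => ω q u w) p (Z p) + ω p (fderiv ℝ Z p u) w
        + ω p u (fderiv ℝ Z p w) = η p u w) ∧
    (∀ p : ℝ × ℝ × ℝ, p.2.1 ≠ 0 → ∀ u w s,
      fderiv ℝ (fun q => η q w s) p u + fderiv ℝ (fun q => η q s u) p w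
        + fderiv ℝ (fun q => η q u w) p s = 0) := by
  have hZfun : Z = fun q : ℝ × ℝ × ℝ =>
      ((q.1 ^ 2 : ℝ), (2 * q.2.1 * q.1, 2 * (q.2.2 * q.1 + q.2.1 ^ 2))) := funext hZ
  constructor
  · intro p hp u w
    have e1 : (fun q => ω q u w)
        = fun q : ℝ × ℝ × ℝ => (u.2.1 * w.2.2 - u.2.2 * w.2.1) / q.2.1 ^ 3 :=
      funext fun q => hω q u w
    rw [e1, hZfun, fderiv_inv3 _ _ _ hp, fderiv_Z, fderiv_Z, hω, hω, hη]
    simp only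
    field_simp
    ring
  · intro p hp u w s
    have e : ∀ a b : ℝ × ℝ × ℝ, (fun q => η q a b)
        = fun q : ℝ × ℝ × ℝ => (-2) / q.2.1 ^ 3 *
          (q.1 * (a.2.1 * b.2.2 - a.2.2 * b.2.1)
            + q.2.1 * (a.2.2 * b.1 - a.1 * b.2.2)
            + q.2.2 * (a.1 * b.2.1 - a.2.1 * b.1)) := by
      intro a b; funext q; rw [hη]; ring
    rw [e w s, e s u, e u w, fderiv_rat _ _ _ _ _ _ hp, fderiv_rat _ _ _ _ _ _ hp,
      fderiv_rat _ _ _ _ _ _ hp]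
    field_simp
    ring
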